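/- Let ψ: [0,∞) → ℝ be twice differentiable on (0,∞) with lim_{s→0⁺} ψ(s) = 0 and lim_{s→0⁺} ψ'(s) = 0, and define ω: ℝⁿ → ℝ by ω(x) = ψ(|x|) for x ≠ 0 and ω(0) = 0. Then ω is twice differentiable at the origin if and only if lim_{s→0⁺} ψ'(s)/s exists and is finite. -/

import Mathlib

open Filter Topology Metric Set

noncomputable def pd {n : ℕ} (i : Fin n) (f : EuclideanSpace ℝ (Fin n) → ℝ)
    (x : EuclideanSpace ℝ (Fin n)) : ℝ :=
  fderiv ℝ f x (EuclideanSpace.single i 1)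

noncomputable def spd {n : ℕ} (i j : Fin n) (f : EuclideanSpace ℝ (Fin n) → ℝ)
    (x : EuclideanSpace ℝ (Fin n)) : ℝ :=
  pd i (pd j f) x

noncomputable def lap {n : ℕ} (f : EuclideanSpace ℝ (Fin n) → ℝ)
    (x : EuclideanSpace ℝ (Fin n)) : ℝ :=
  ∑ i, spd i i f x

def TwiceDiffAt {n : ℕ} (f : EuclideanSpace ℝ (Fin n) → ℝ)
    (p : EuclideanSpace ℝ (Fin n)) : Prop :=
  (∀ᶠ x in 𝓝 p, DifferentiableAt ℝ f x) ∧
  DifferentiableAt ℝ (fderiv ℝ f) p ∧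
  Tendsto (fun x => (f x - f p - fderiv ℝ f p (x - p)
      - (1/2) * fderiv ℝ (fderiv ℝ f) p (x - p) (x - p)) / ‖x - p‖^2)
    (𝓝[≠] p) (𝓝 0)

lemma aux_hasFDerivAt_norm {E : Type*} [NormedAddCommGroup E] [InnerProductSpace ℝ E]
    {x : E} (hx : x ≠ 0) :
    HasFDerivAt (fun y : E => ‖y‖) (‖x‖⁻¹ • innerSL ℝ x) x := by
  have h1 : HasFDerivAt (fun y : E => ‖y‖ ^ 2) ((2:ℕ) • innerSL ℝ x) x :=
    (hasStrictFDerivAt_norm_sq x).hasFDerivAt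
  have hx' : (0:ℝ) < ‖x‖ := norm_pos_iff.2 hx
  have h2 : HasDerivAt Real.sqrt (1 / (2 * Real.sqrt (‖x‖ ^ 2))) (‖x‖ ^ 2) :=
    Real.hasDerivAt_sqrt (by positivity)
  have h3 := h2.comp_hasFDerivAt x h1
  have h4 : (Real.sqrt ∘ fun y : E => ‖y‖ ^ 2) = fun y : E => ‖y‖ := by
    funext y; simp [Function.comp, Real.sqrt_sq (norm_nonneg y)]
  rw [h4] at h3
  refine h3.congr_fderiv ?_
  rw [Real.sqrt_sq (norm_nonneg x)]
  ext v
  simp [smul_smul]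
  field_simp

set_option maxHeartbeats 2000000 in
open scoped Classical in
theorem stmt5 (n : ℕ) (hn : 1 ≤ n) (ψ : ℝ → ℝ)
    (hdiff : ∀ s ∈ Set.Ioi (0:ℝ), DifferentiableAt ℝ ψ s ∧ DifferentiableAt ℝ (deriv ψ) s)
    (hψ0 : Tendsto ψ (𝓝[>] 0) (𝓝 0))
    (hψ'0 : Tendsto (deriv ψ) (𝓝[>] 0) (𝓝 0)) :
    TwiceDiffAt (fun x : EuclideanSpace ℝ (Fin n) => if x = 0 then 0 else ψ ‖x‖) 0 ↔
      ∃ L : ℝ, Tendsto (fun s => deriv ψ s / s) (𝓝[>] 0) (𝓝 L) := by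
  set ω : EuclideanSpace ℝ (Fin n) → ℝ := fun x => if x = 0 then 0 else ψ ‖x‖ with hωdef
  set F : EuclideanSpace ℝ (Fin n) → (EuclideanSpace ℝ (Fin n) →L[ℝ] ℝ) :=
    fun x => (deriv ψ ‖x‖ / ‖x‖) • innerSL ℝ x with hFdef
  have hF0 : F 0 = 0 := by simp [hFdef]
  have hψs : Tendsto (fun s => ψ s / s) (𝓝[>] (0:ℝ)) (𝓝 0) := by
    refine deriv.lhopital_zero_nhdsGT (g := fun s => s) ?_ ?_ hψ0 ?_ ?_
    · filter_upwards [self_mem_nhdsWithin] with s hs; exact (hdiff s hs).1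
    · filter_upwards with s; simp
    · exact tendsto_id.mono_left nhdsWithin_le_nhds
    · simpa using hψ'0
  have hω0 : HasFDerivAt ω (0 : EuclideanSpace ℝ (Fin n) →L[ℝ] ℝ) 0 := by
    rw [hasFDerivAt_iff_isLittleO_nhds_zero, Asymptotics.isLittleO_iff]
    intro c hc
    rw [Metric.tendsto_nhdsWithin_nhds] at hψs
    obtain ⟨δ, hδ, hδ'⟩ := hψs c hc
    filter_upwards [Metric.ball_mem_nhds (0 : EuclideanSpace ℝ (Fin n)) hδ] with h hh
    simp only [zero_add, ContinuousLinearMap.zero_apply, sub_zero]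
    by_cases h0 : h = 0
    · simp [hωdef, h0]
    · have hs : ‖h‖ ∈ Set.Ioi (0:ℝ) := norm_pos_iff.2 h0
      have hd : dist ‖h‖ 0 < δ := by
        rw [Real.dist_eq, sub_zero, abs_of_nonneg (norm_nonneg h)]
        simpa using mem_ball_zero_iff.mp hh
      have h1 : |ψ ‖h‖| / ‖h‖ < c := by
        simpa [Real.dist_eq, abs_div, abs_of_nonneg (norm_nonneg h)] using hδ' hs hd
      have h2 : |ψ ‖h‖| ≤ c * ‖h‖ := by
        rw [div_lt_iff₀ (norm_pos_iff.2 h0)] at h1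
        linarith [h1]
      have he : ω h - ω 0 = ψ ‖h‖ := by simp [hωdef, h0]
      rw [he]
      simpa [Real.norm_eq_abs] using h2
  have hωx : ∀ x : EuclideanSpace ℝ (Fin n), x ≠ 0 → HasFDerivAt ω (F x) x := by
    intro x hx
    have hx' : (0:ℝ) < ‖x‖ := norm_pos_iff.2 hx
    have hψd : HasDerivAt ψ (deriv ψ ‖x‖) ‖x‖ := ((hdiff _ hx').1).hasDerivAt
    have hcomp := hψd.comp_hasFDerivAt x (aux_hasFDerivAt_norm hx)
    have heq : ω =ᶠ[𝓝 x] fun y => ψ ‖y‖ := by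
      filter_upwards [eventually_ne_nhds hx] with y hy
      simp [hωdef, hy]
    have h5 := hcomp.congr_of_eventuallyEq heq
    refine h5.congr_fderiv ?_
    rw [hFdef]
    simp only
    rw [smul_smul, div_eq_mul_inv]
  have hfd : fderiv ℝ ω = F := by
    funext x
    by_cases hx : x = 0
    · subst hx; rw [hω0.fderiv, hF0]
    · exact (hωx x hx).fderiv
  have hdall : ∀ x, DifferentiableAt ℝ ω x := by
    intro x
    by_cases hx : x = 0
    · subst hx; exact hω0.differentiableAt
    · exact (hωx x hx).differentiableAt
  constructor
  · rintro ⟨h1, h2, h3⟩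
    rw [hfd] at h2
    have hA : HasFDerivAt F (fderiv ℝ F 0) 0 := h2.hasFDerivAt
    set A := fderiv ℝ F 0 with hAdef
    set e : EuclideanSpace ℝ (Fin n) := EuclideanSpace.single (⟨0, hn⟩ : Fin n) 1 with he
    have hne : ‖e‖ = 1 := by rw [he, EuclideanSpace.norm_single]; norm_num
    refine ⟨A e e, ?_⟩
    rw [Metric.tendsto_nhdsWithin_nhds]
    intro ε hε
    rw [hasFDerivAt_iff_isLittleO_nhds_zero, Asymptotics.isLittleO_iff] at hA
    have h4 := hA (half_pos hε)
    rw [Metric.eventually_nhds_iff] at h4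
    obtain ⟨δ, hδ, hδ'⟩ := h4
    refine ⟨δ, hδ, ?_⟩
    intro s hs hsd
    have hs0 : (0:ℝ) < s := hs
    set x : EuclideanSpace ℝ (Fin n) := s • e with hx
    have hnx : ‖x‖ = s := by
      rw [hx, norm_smul, hne, Real.norm_eq_abs, abs_of_pos hs0, mul_one]
    have hxd : dist x 0 < δ := by
      rw [dist_zero_right, hnx]
      simpa [Real.dist_eq, abs_of_pos hs0] using hsd
    have h5 : ‖F x - A x‖ ≤ ε/2 * ‖x‖ := by
      have := hδ' hxd
      simpa [hF0] using this
    have h6 : |F x e - A x e| ≤ ‖F x - A x‖ * ‖e‖ := by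
      have := (F x - A x).le_opNorm e
      simpa [Real.norm_eq_abs] using this
    have h7 : |F x e - A x e| ≤ ε/2 * s := by
      calc |F x e - A x e| ≤ ‖F x - A x‖ * ‖e‖ := h6
      _ = ‖F x - A x‖ := by rw [hne, mul_one]
      _ ≤ ε/2 * s := by rw [← hnx]; exact h5
    have hinner : (inner ℝ x e : ℝ) = s := by
      rw [hx, real_inner_smul_left, real_inner_self_eq_norm_sq, hne]; ring
    have hFxe : F x e = deriv ψ s := by
      rw [hFdef]
      simp only [ContinuousLinearMap.smul_apply, innerSL_apply_apply, smul_eq_mul, hnx, hinner]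
      exact div_mul_cancel₀ _ hs0.ne' 
    have hAxe : A x e = s * (A e e) := by
      rw [hx, map_smul]; simp
    rw [Real.dist_eq]
    have hrw : deriv ψ s / s - A e e = (F x e - A x e)/s := by
      rw [hFxe, hAxe]; field_simp
    rw [hrw, abs_div, abs_of_pos hs0]
    calc |F x e - A x e| / s ≤ (ε/2 * s)/s := by gcongr
    _ = ε/2 := mul_div_cancel_right₀ _ hs0.ne' 
    _ < ε := half_lt_self hε
  · rintro ⟨L, hL⟩
    have hFA : HasFDerivAt F (L • (innerSL ℝ :
        EuclideanSpace ℝ (Fin n) →L[ℝ] EuclideanSpace ℝ (Fin n) →L[ℝ] ℝ)) 0 := by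
      rw [hasFDerivAt_iff_isLittleO_nhds_zero, Asymptotics.isLittleO_iff]
      intro c hc
      have hL' := hL
      rw [Metric.tendsto_nhdsWithin_nhds] at hL'
      obtain ⟨δ, hδ, hδ'⟩ := hL' c hc
      filter_upwards [Metric.ball_mem_nhds (0 : EuclideanSpace ℝ (Fin n)) hδ] with h hh
      by_cases h0 : h = 0
      · simp [hF0, h0]
      · have hs : ‖h‖ ∈ Set.Ioi (0:ℝ) := norm_pos_iff.2 h0
        have hd : dist ‖h‖ 0 < δ := by
          rw [Real.dist_eq, sub_zero, abs_of_nonneg (norm_nonneg h)]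
          simpa using mem_ball_zero_iff.mp hh
        have h1 : |deriv ψ ‖h‖ / ‖h‖ - L| < c := by
          simpa [Real.dist_eq] using hδ' hs hd
        simp only [zero_add, hF0, sub_zero]
        have heq : F h - (L • (innerSL ℝ :
            EuclideanSpace ℝ (Fin n) →L[ℝ] EuclideanSpace ℝ (Fin n) →L[ℝ] ℝ)) h
            = (deriv ψ ‖h‖ / ‖h‖ - L) • innerSL ℝ h := by
          rw [hFdef]; simp only [ContinuousLinearMap.smul_apply, sub_smul]
        rw [heq]
        refine (norm_smul_le (deriv ψ ‖h‖ / ‖h‖ - L) ((innerSL ℝ) h)).trans ?_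
        rw [innerSL_apply_norm, Real.norm_eq_abs]
        exact mul_le_mul_of_nonneg_right h1.le (norm_nonneg h)
    refine ⟨Eventually.of_forall hdall, ?_, ?_⟩
    · rw [hfd]; exact hFA.differentiableAt
    · have h20 : fderiv ℝ ω 0 = 0 := hω0.fderiv
      have h21 : fderiv ℝ (fderiv ℝ ω) 0 = L • (innerSL ℝ :
          EuclideanSpace ℝ (Fin n) →L[ℝ] EuclideanSpace ℝ (Fin n) →L[ℝ] ℝ) := by
        rw [hfd]; exact hFA.fderiv
      have hB : Tendsto (fun s => ψ s / s^2) (𝓝[>] (0:ℝ)) (𝓝 (L/2)) := by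
        refine deriv.lhopital_zero_nhdsGT (g := fun s => s^2) ?_ ?_ hψ0 ?_ ?_
        · filter_upwards [self_mem_nhdsWithin] with s hs; exact (hdiff s hs).1
        · filter_upwards [self_mem_nhdsWithin] with s hs
          rw [deriv_pow_field]
          norm_num
          exact ne_of_gt hs
        · have h2 : Tendsto (fun s : ℝ => s^2) (𝓝 0) (𝓝 0) := by
            simpa using (continuous_pow 2).tendsto (0:ℝ)
          exact h2.mono_left nhdsWithin_le_nhds
        · refine Tendsto.congr' ?_ (hL.div_const 2)
          filter_upwards [self_mem_nhdsWithin] with s hs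
          rw [deriv_pow_field]
          norm_num
          rw [div_div]
          ring
      have hnt : Tendsto (fun x : EuclideanSpace ℝ (Fin n) => ‖x‖)
          (𝓝[≠] (0:EuclideanSpace ℝ (Fin n))) (𝓝[>] 0) := by
        apply tendsto_nhdsWithin_of_tendsto_nhds_of_eventually_within
        · exact (continuous_norm.tendsto' 0 0 norm_zero).mono_left nhdsWithin_le_nhds
        · filter_upwards [self_mem_nhdsWithin] with x hx
          exact norm_pos_iff.2 hx
      have hmain : Tendsto (fun x : EuclideanSpace ℝ (Fin n) => ψ ‖x‖ / ‖x‖^2 - L/2)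
          (𝓝[≠] (0:EuclideanSpace ℝ (Fin n))) (𝓝 0) := by
        have h8 := (hB.comp hnt).sub_const (L/2)
        simpa using h8
      refine Tendsto.congr' ?_ hmain
      filter_upwards [self_mem_nhdsWithin] with x hx
      have hx0 : x ≠ 0 := hx
      have hs0 : (0:ℝ) < ‖x‖ := norm_pos_iff.2 hx0
      have hωx0 : ω x = ψ ‖x‖ := by simp [hωdef, hx0]
      have hω00 : ω 0 = 0 := by simp [hωdef]
      have hii : (innerSL ℝ x) x = ‖x‖^2 := real_inner_self_eq_norm_sq x
      simp only [sub_zero, h20, h21, ContinuousLinearMap.zero_apply, hωx0, hω00,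
        ContinuousLinearMap.smul_apply, innerSL_apply_apply, smul_eq_mul, real_inner_self_eq_norm_sq, hii]
      field_simp
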